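/- arXiv:0801.1872 — 4 statements merged into one kernel-verified Lean document; each statement's English description precedes it below -/
import Mathlib

section
/- The ten functions of s > 0 given by f⁻(s)/s², f⁻(s), s²·f⁻(s), f⁺(s), z(s)/s, s·z(s), g⁻(s)/√s, (√s)³·g⁻(s), g⁺(s)/(√s)³, √s·g⁺(s) are linearly independent over ℝ as functions on (0,∞), where f^±(s) = (1 ± cos√s·cosh√s)/2, z(s) = (sin√s·sinh√s)/2, g^±(s) = (−sin√s·cosh√s ± cos√s·sinh√s)/2. -/
open Filter Topology Real

private lemma tl_exp : Tendsto (fun x : ℝ => exp (-x)) atTop (𝓝 0) :=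
  Real.tendsto_exp_neg_atTop_nhds_zero

private lemma tl_pow (m : ℕ) : Tendsto (fun x : ℝ => x ^ m * exp (-x)) atTop (𝓝 0) :=
  Real.tendsto_pow_mul_exp_neg_atTop_nhds_zero m

private lemma tl_ch : Tendsto (fun x : ℝ => cosh x * exp (-x)) atTop (𝓝 (1/2)) := by
  have h1 : (fun x : ℝ => cosh x * exp (-x))
      = fun x : ℝ => 1/2 + exp (-x) * exp (-x) / 2 := by
    funext x
    have h2 : exp x * exp (-x) = 1 := by rw [← Real.exp_add]; simp
    rw [Real.cosh_eq]
    linear_combination (1/2) * h2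
  have h2 := ((tl_exp.mul tl_exp).div_const 2).const_add (1/2 : ℝ)
  have h3 : (1:ℝ)/2 + 0 * 0 / 2 = 1/2 := by norm_num
  rw [h3] at h2
  rw [h1]
  exact h2

private lemma tl_sh : Tendsto (fun x : ℝ => sinh x * exp (-x)) atTop (𝓝 (1/2)) := by
  have h1 : (fun x : ℝ => sinh x * exp (-x))
      = fun x : ℝ => 1/2 - exp (-x) * exp (-x) / 2 := by
    funext x
    have h2 : exp x * exp (-x) = 1 := by rw [← Real.exp_add]; simp
    rw [Real.sinh_eq]
    linear_combination (1/2) * h2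
  have h2 := (tendsto_const_nhds (x := (1:ℝ)/2) (f := atTop)).sub
    ((tl_exp.mul tl_exp).div_const 2)
  have h3 : (1:ℝ)/2 - 0 * 0 / 2 = 1/2 := by norm_num
  rw [h3] at h2
  rw [h1]
  exact h2

private lemma tl_sub : Tendsto (fun x : ℝ => (1 - cosh x) * exp (-x)) atTop (𝓝 (-(1/2))) := by
  have h2 := tl_exp.sub tl_ch
  have h3 : (0:ℝ) - 1/2 = -(1/2) := by norm_num
  exact h3 ▸ (h2.congr fun x => by ring)

private lemma tl_add : Tendsto (fun x : ℝ => (1 + cosh x) * exp (-x)) atTop (𝓝 (1/2)) := by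
  have h2 := tl_exp.add tl_ch
  have h3 : (0:ℝ) + 1/2 = 1/2 := by norm_num
  exact h3 ▸ (h2.congr fun x => by ring)

private lemma tl_div {f : ℝ → ℝ} {L : ℝ} (hf : Tendsto f atTop (𝓝 L)) (k : ℕ) (hk : k ≠ 0) :
    Tendsto (fun x : ℝ => f x / x ^ k) atTop (𝓝 0) :=
  hf.div_atTop (tendsto_pow_atTop hk)

private lemma key_limit (w Gf : ℝ → ℝ) {seq : ℕ → ℝ} {a : ℝ}
    (hseq : Tendsto seq atTop atTop)
    (hG : ∀ n, Gf (seq n) = 0)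
    (hlim : Tendsto (fun x => w x * Gf x) atTop (𝓝 a)) : a = 0 := by
  have h1 := hlim.comp hseq
  have h2 : ∀ n, ((fun x => w x * Gf x) ∘ seq) n = (0:ℝ) := fun n => by
    simp [Function.comp, hG n]
  have h3 : Tendsto (fun _ : ℕ => (0:ℝ)) atTop (𝓝 a) := h1.congr h2
  exact (tendsto_nhds_unique h3 tendsto_const_nhds)

set_option maxHeartbeats 1600000

open Real in
theorem ten_determinant_functions_linear_independent
    (c₁ c₂ c₃ c₄ c₅ c₆ c₇ c₈ c₉ c₁₀ : ℝ)
    (fm : ℝ → ℝ) (fp : ℝ → ℝ) (z : ℝ → ℝ) (gm : ℝ → ℝ) (gp : ℝ → ℝ)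
    (hfm : ∀ s, fm s = (1 - cos (sqrt s) * cosh (sqrt s)) / 2)
    (hfp : ∀ s, fp s = (1 + cos (sqrt s) * cosh (sqrt s)) / 2)
    (hz : ∀ s, z s = (sin (sqrt s) * sinh (sqrt s)) / 2)
    (hgm : ∀ s, gm s = (-sin (sqrt s) * cosh (sqrt s) - cos (sqrt s) * sinh (sqrt s)) / 2)
    (hgp : ∀ s, gp s = (-sin (sqrt s) * cosh (sqrt s) + cos (sqrt s) * sinh (sqrt s)) / 2)
    (h : ∀ s : ℝ, 0 < s →
      c₁ * (fm s / s ^ 2) + c₂ * fm s + c₃ * (s ^ 2 * fm s) + c₄ * fp s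
      + c₅ * (z s / s) + c₆ * (s * z s)
      + c₇ * (gm s / sqrt s) + c₈ * (sqrt s ^ 3 * gm s)
      + c₉ * (gp s / sqrt s ^ 3) + c₁₀ * (sqrt s * gp s) = 0) :
    c₁ = 0 ∧ c₂ = 0 ∧ c₃ = 0 ∧ c₄ = 0 ∧ c₅ = 0 ∧ c₆ = 0 ∧ c₇ = 0 ∧ c₈ = 0 ∧ c₉ = 0 ∧ c₁₀ = 0 := by
  -- the two sequences
  set t : ℕ → ℝ := fun n => ((n + 1 : ℕ) : ℝ) * (2 * π) with htdef
  set u : ℕ → ℝ := fun n => π / 2 + ((n + 1 : ℕ) : ℝ) * (2 * π) with hudef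
  have htpos : ∀ n, 0 < t n := fun n =>
    mul_pos (by exact_mod_cast Nat.succ_pos n) (by positivity)
  have hupos : ∀ n, 0 < u n := fun n => by
    have := htpos n
    rw [htdef] at this
    rw [hudef]
    have hpi := Real.pi_pos
    dsimp only at this ⊢
    linarith
  have ht_top : Tendsto t atTop atTop := by
    have h1 : Tendsto (fun n : ℕ => ((n + 1 : ℕ) : ℝ)) atTop atTop :=
      tendsto_natCast_atTop_atTop.comp (tendsto_add_atTop_nat 1)
    exact h1.atTop_mul_const (by positivity)
  have hu_top : Tendsto u atTop atTop := by
    have h1 : Tendsto (fun n : ℕ => ((n + 1 : ℕ) : ℝ)) atTop atTop :=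
      tendsto_natCast_atTop_atTop.comp (tendsto_add_atTop_nat 1)
    exact tendsto_atTop_add_const_left _ _ (h1.atTop_mul_const (by positivity))
  have hcost : ∀ n, Real.cos (t n) = 1 := fun n => Real.cos_nat_mul_two_pi (n + 1)
  have hsint : ∀ n, Real.sin (t n) = 0 := fun n => by
    have h1 := Real.sin_add_nat_mul_two_pi 0 (n + 1)
    rw [zero_add, Real.sin_zero] at h1
    exact h1
  have hcosu : ∀ n, Real.cos (u n) = 0 := fun n => by
    rw [hudef]
    dsimp only
    rw [Real.cos_add_nat_mul_two_pi, Real.cos_pi_div_two]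
  have hsinu : ∀ n, Real.sin (u n) = 1 := fun n => by
    rw [hudef]
    dsimp only
    rw [Real.sin_add_nat_mul_two_pi, Real.sin_pi_div_two]
  -- the reduced functions along the two sequences
  set G : ℝ → ℝ := fun x =>
    c₁ * ((1 - Real.cosh x) / 2 / x ^ 4) + c₂ * ((1 - Real.cosh x) / 2)
    + c₃ * (x ^ 4 * ((1 - Real.cosh x) / 2)) + c₄ * ((1 + Real.cosh x) / 2)
    + c₇ * (-Real.sinh x / 2 / x) + c₈ * (x ^ 3 * (-Real.sinh x / 2))
    + c₉ * (Real.sinh x / 2 / x ^ 3) + c₁₀ * (x * (Real.sinh x / 2)) with hGdef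
  set H : ℝ → ℝ := fun x =>
    c₁ * ((1:ℝ) / 2 / x ^ 4) + c₂ * ((1:ℝ) / 2)
    + c₃ * (x ^ 4 * ((1:ℝ) / 2)) + c₄ * ((1:ℝ) / 2)
    + c₅ * (Real.sinh x / 2 / x ^ 2) + c₆ * (x ^ 2 * (Real.sinh x / 2))
    + c₇ * (-Real.cosh x / 2 / x) + c₈ * (x ^ 3 * (-Real.cosh x / 2))
    + c₉ * (-Real.cosh x / 2 / x ^ 3) + c₁₀ * (x * (-Real.cosh x / 2)) with hHdef
  have hG : ∀ n, G (t n) = 0 := by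
    intro n
    have hpos := htpos n
    have h' := h ((t n) ^ 2) (by positivity)
    rw [hfm, hfp, hz, hgm, hgp, Real.sqrt_sq hpos.le, hcost n, hsint n] at h'
    rw [hGdef]
    dsimp only
    linear_combination h'
  have hH : ∀ n, H (u n) = 0 := by
    intro n
    have hpos := hupos n
    have h' := h ((u n) ^ 2) (by positivity)
    rw [hfm, hfp, hz, hgm, hgp, Real.sqrt_sq hpos.le, hcosu n, hsinu n] at h'
    rw [hHdef]
    dsimp only
    linear_combination h'
  -- Step 1 : c₃ = 0 (weight exp(-x)/x⁴ along t)
  have hc3 : c₃ = 0 := by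
    have C := ((((((((tl_div tl_sub 8 (by norm_num)).const_mul (c₁/2)).add
      ((tl_div tl_sub 4 (by norm_num)).const_mul (c₂/2))).add
      (tl_sub.const_mul (c₃/2))).add
      ((tl_div tl_add 4 (by norm_num)).const_mul (c₄/2))).add
      ((tl_div tl_sh 5 (by norm_num)).const_mul (-(c₇/2)))).add
      ((tl_div tl_sh 1 (by norm_num)).const_mul (-(c₈/2)))).add
      ((tl_div tl_sh 7 (by norm_num)).const_mul (c₉/2))).add
      ((tl_div tl_sh 3 (by norm_num)).const_mul (c₁₀/2))
    have E : (fun x : ℝ =>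
        (c₁/2) * ((1 - Real.cosh x) * Real.exp (-x) / x ^ 8)
        + (c₂/2) * ((1 - Real.cosh x) * Real.exp (-x) / x ^ 4)
        + (c₃/2) * ((1 - Real.cosh x) * Real.exp (-x))
        + (c₄/2) * ((1 + Real.cosh x) * Real.exp (-x) / x ^ 4)
        + (-(c₇/2)) * (Real.sinh x * Real.exp (-x) / x ^ 5)
        + (-(c₈/2)) * (Real.sinh x * Real.exp (-x) / x ^ 1)
        + (c₉/2) * (Real.sinh x * Real.exp (-x) / x ^ 7)
        + (c₁₀/2) * (Real.sinh x * Real.exp (-x) / x ^ 3))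
        =ᶠ[atTop] fun x : ℝ => (Real.exp (-x) / x ^ 4) * G x := by
      filter_upwards [eventually_gt_atTop (0:ℝ)] with x hx
      rw [hGdef]
      dsimp only
      field_simp
    have hval := key_limit (fun x : ℝ => Real.exp (-x) / x ^ 4) G ht_top hG (C.congr' E)
    linarith
  subst hc3
  -- Step 2 : c₈ = 0 (weight exp(-x)/x³ along u)
  have hc8 : c₈ = 0 := by
    have C := (((((((((tl_div tl_exp 7 (by norm_num)).const_mul (c₁/2)).add
      ((tl_div tl_exp 3 (by norm_num)).const_mul (c₂/2))).add
      ((tl_div tl_exp 3 (by norm_num)).const_mul (c₄/2))).add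
      ((tl_div tl_sh 5 (by norm_num)).const_mul (c₅/2))).add
      ((tl_div tl_sh 1 (by norm_num)).const_mul (c₆/2))).add
      ((tl_div tl_ch 4 (by norm_num)).const_mul (-(c₇/2)))).add
      (tl_ch.const_mul (-(c₈/2)))).add
      ((tl_div tl_ch 6 (by norm_num)).const_mul (-(c₉/2)))).add
      ((tl_div tl_ch 2 (by norm_num)).const_mul (-(c₁₀/2)))
    have E : (fun x : ℝ =>
        (c₁/2) * (Real.exp (-x) / x ^ 7)
        + (c₂/2) * (Real.exp (-x) / x ^ 3)
        + (c₄/2) * (Real.exp (-x) / x ^ 3)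
        + (c₅/2) * (Real.sinh x * Real.exp (-x) / x ^ 5)
        + (c₆/2) * (Real.sinh x * Real.exp (-x) / x ^ 1)
        + (-(c₇/2)) * (Real.cosh x * Real.exp (-x) / x ^ 4)
        + (-(c₈/2)) * (Real.cosh x * Real.exp (-x))
        + (-(c₉/2)) * (Real.cosh x * Real.exp (-x) / x ^ 6)
        + (-(c₁₀/2)) * (Real.cosh x * Real.exp (-x) / x ^ 2))
        =ᶠ[atTop] fun x : ℝ => (Real.exp (-x) / x ^ 3) * H x := by
      filter_upwards [eventually_gt_atTop (0:ℝ)] with x hx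
      rw [hHdef]
      dsimp only
      field_simp
      ring
    have hval := key_limit (fun x : ℝ => Real.exp (-x) / x ^ 3) H hu_top hH (C.congr' E)
    linarith
  subst hc8
  -- Step 3 : c₆ = 0 (weight exp(-x)/x² along u)
  have hc6 : c₆ = 0 := by
    have C := ((((((((tl_div tl_exp 6 (by norm_num)).const_mul (c₁/2)).add
      ((tl_div tl_exp 2 (by norm_num)).const_mul (c₂/2))).add
      ((tl_div tl_exp 2 (by norm_num)).const_mul (c₄/2))).add
      ((tl_div tl_sh 4 (by norm_num)).const_mul (c₅/2))).add
      (tl_sh.const_mul (c₆/2))).add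
      ((tl_div tl_ch 3 (by norm_num)).const_mul (-(c₇/2)))).add
      ((tl_div tl_ch 5 (by norm_num)).const_mul (-(c₉/2)))).add
      ((tl_div tl_ch 1 (by norm_num)).const_mul (-(c₁₀/2)))
    have E : (fun x : ℝ =>
        (c₁/2) * (Real.exp (-x) / x ^ 6)
        + (c₂/2) * (Real.exp (-x) / x ^ 2)
        + (c₄/2) * (Real.exp (-x) / x ^ 2)
        + (c₅/2) * (Real.sinh x * Real.exp (-x) / x ^ 4)
        + (c₆/2) * (Real.sinh x * Real.exp (-x))
        + (-(c₇/2)) * (Real.cosh x * Real.exp (-x) / x ^ 3)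
        + (-(c₉/2)) * (Real.cosh x * Real.exp (-x) / x ^ 5)
        + (-(c₁₀/2)) * (Real.cosh x * Real.exp (-x) / x ^ 1))
        =ᶠ[atTop] fun x : ℝ => (Real.exp (-x) / x ^ 2) * H x := by
      filter_upwards [eventually_gt_atTop (0:ℝ)] with x hx
      rw [hHdef]
      dsimp only
      field_simp
      ring
    have hval := key_limit (fun x : ℝ => Real.exp (-x) / x ^ 2) H hu_top hH (C.congr' E)
    linarith
  subst hc6
  -- Step 4 : c₁₀ = 0 (weight exp(-x)/x along t)
  have hc10 : c₁₀ = 0 := by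
    have C := ((((((tl_div tl_sub 5 (by norm_num)).const_mul (c₁/2)).add
      ((tl_div tl_sub 1 (by norm_num)).const_mul (c₂/2))).add
      ((tl_div tl_add 1 (by norm_num)).const_mul (c₄/2))).add
      ((tl_div tl_sh 2 (by norm_num)).const_mul (-(c₇/2)))).add
      ((tl_div tl_sh 4 (by norm_num)).const_mul (c₉/2))).add
      (tl_sh.const_mul (c₁₀/2))
    have E : (fun x : ℝ =>
        (c₁/2) * ((1 - Real.cosh x) * Real.exp (-x) / x ^ 5)
        + (c₂/2) * ((1 - Real.cosh x) * Real.exp (-x) / x ^ 1)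
        + (c₄/2) * ((1 + Real.cosh x) * Real.exp (-x) / x ^ 1)
        + (-(c₇/2)) * (Real.sinh x * Real.exp (-x) / x ^ 2)
        + (c₉/2) * (Real.sinh x * Real.exp (-x) / x ^ 4)
        + (c₁₀/2) * (Real.sinh x * Real.exp (-x)))
        =ᶠ[atTop] fun x : ℝ => (Real.exp (-x) / x ^ 1) * G x := by
      filter_upwards [eventually_gt_atTop (0:ℝ)] with x hx
      rw [hGdef]
      dsimp only
      field_simp
      ring
    have hval := key_limit (fun x : ℝ => Real.exp (-x) / x ^ 1) G ht_top hG (C.congr' E)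
    linarith
  subst hc10
  -- Step 5 : c₄ = c₂ (weight exp(-x) along t)
  have hc4 : c₄ = c₂ := by
    have C := (((((tl_div tl_sub 4 (by norm_num)).const_mul (c₁/2)).add
      (tl_sub.const_mul (c₂/2))).add
      (tl_add.const_mul (c₄/2))).add
      ((tl_div tl_sh 1 (by norm_num)).const_mul (-(c₇/2)))).add
      ((tl_div tl_sh 3 (by norm_num)).const_mul (c₉/2))
    have E : (fun x : ℝ =>
        (c₁/2) * ((1 - Real.cosh x) * Real.exp (-x) / x ^ 4)
        + (c₂/2) * ((1 - Real.cosh x) * Real.exp (-x))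
        + (c₄/2) * ((1 + Real.cosh x) * Real.exp (-x))
        + (-(c₇/2)) * (Real.sinh x * Real.exp (-x) / x ^ 1)
        + (c₉/2) * (Real.sinh x * Real.exp (-x) / x ^ 3))
        =ᶠ[atTop] fun x : ℝ => Real.exp (-x) * G x := by
      filter_upwards [eventually_gt_atTop (0:ℝ)] with x hx
      rw [hGdef]
      dsimp only
      field_simp
      ring
    have hval := key_limit (fun x : ℝ => Real.exp (-x)) G ht_top hG (C.congr' E)
    linarith
  subst hc4
  -- Step 6 : c₇ = 0 (weight x·exp(-x) along u)
  have hc7 : c₇ = 0 := by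
    have C := ((((((tl_div tl_exp 3 (by norm_num)).const_mul (c₁/2)).add
      ((tl_pow 1).const_mul (c₄/2))).add
      ((tl_pow 1).const_mul (c₄/2))).add
      ((tl_div tl_sh 1 (by norm_num)).const_mul (c₅/2))).add
      (tl_ch.const_mul (-(c₇/2)))).add
      ((tl_div tl_ch 2 (by norm_num)).const_mul (-(c₉/2)))
    have E : (fun x : ℝ =>
        (c₁/2) * (Real.exp (-x) / x ^ 3)
        + (c₄/2) * (x ^ 1 * Real.exp (-x))
        + (c₄/2) * (x ^ 1 * Real.exp (-x))
        + (c₅/2) * (Real.sinh x * Real.exp (-x) / x ^ 1)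
        + (-(c₇/2)) * (Real.cosh x * Real.exp (-x))
        + (-(c₉/2)) * (Real.cosh x * Real.exp (-x) / x ^ 2))
        =ᶠ[atTop] fun x : ℝ => (x * Real.exp (-x)) * H x := by
      filter_upwards [eventually_gt_atTop (0:ℝ)] with x hx
      rw [hHdef]
      dsimp only
      field_simp
      ring
    have hval := key_limit (fun x : ℝ => x * Real.exp (-x)) H hu_top hH (C.congr' E)
    linarith
  subst hc7
  -- Step 7 : c₅ = 0 (weight x²·exp(-x) along u)
  have hc5 : c₅ = 0 := by
    have C := (((((tl_div tl_exp 2 (by norm_num)).const_mul (c₁/2)).add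
      ((tl_pow 2).const_mul (c₄/2))).add
      ((tl_pow 2).const_mul (c₄/2))).add
      (tl_sh.const_mul (c₅/2))).add
      ((tl_div tl_ch 1 (by norm_num)).const_mul (-(c₉/2)))
    have E : (fun x : ℝ =>
        (c₁/2) * (Real.exp (-x) / x ^ 2)
        + (c₄/2) * (x ^ 2 * Real.exp (-x))
        + (c₄/2) * (x ^ 2 * Real.exp (-x))
        + (c₅/2) * (Real.sinh x * Real.exp (-x))
        + (-(c₉/2)) * (Real.cosh x * Real.exp (-x) / x ^ 1))
        =ᶠ[atTop] fun x : ℝ => (x ^ 2 * Real.exp (-x)) * H x := by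
      filter_upwards [eventually_gt_atTop (0:ℝ)] with x hx
      rw [hHdef]
      dsimp only
      field_simp
      ring
    have hval := key_limit (fun x : ℝ => x ^ 2 * Real.exp (-x)) H hu_top hH (C.congr' E)
    linarith
  subst hc5
  -- Step 8 : c₉ = 0 (weight x³·exp(-x) along t)
  have hc9 : c₉ = 0 := by
    have C := (((tl_div tl_sub 1 (by norm_num)).const_mul (c₁/2)).add
      ((tl_pow 3).const_mul c₄)).add
      (tl_sh.const_mul (c₉/2))
    have E : (fun x : ℝ =>
        (c₁/2) * ((1 - Real.cosh x) * Real.exp (-x) / x ^ 1)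
        + c₄ * (x ^ 3 * Real.exp (-x))
        + (c₉/2) * (Real.sinh x * Real.exp (-x)))
        =ᶠ[atTop] fun x : ℝ => (x ^ 3 * Real.exp (-x)) * G x := by
      filter_upwards [eventually_gt_atTop (0:ℝ)] with x hx
      rw [hGdef]
      dsimp only
      field_simp
      ring
    have hval := key_limit (fun x : ℝ => x ^ 3 * Real.exp (-x)) G ht_top hG (C.congr' E)
    linarith
  subst hc9
  -- Step 9 : c₁ = 0 (weight x⁴·exp(-x) along t)
  have hc1 : c₁ = 0 := by
    have C := (tl_sub.const_mul (c₁/2)).add ((tl_pow 4).const_mul c₄)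
    have E : (fun x : ℝ =>
        (c₁/2) * ((1 - Real.cosh x) * Real.exp (-x))
        + c₄ * (x ^ 4 * Real.exp (-x)))
        =ᶠ[atTop] fun x : ℝ => (x ^ 4 * Real.exp (-x)) * G x := by
      filter_upwards [eventually_gt_atTop (0:ℝ)] with x hx
      rw [hGdef]
      dsimp only
      field_simp
      ring
    have hval := key_limit (fun x : ℝ => x ^ 4 * Real.exp (-x)) G ht_top hG (C.congr' E)
    linarith
  subst hc1
  -- Step 10 : c₄ = 0
  have hc2 : c₄ = 0 := by linear_combination hH 0
  subst hc2
  norm_num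
end

section
/- Let a₁, a₂, a₅, a₆ and ã₁, ã₂, ã₅, ã₆ be real numbers satisfying: a₁·a₅ = ã₁·ã₅, a₁ + a₅ = ã₁ + ã₅, a₂·a₆ = ã₂·ã₆, a₂ + a₆ = ã₂ + ã₆, and a₁·a₂ + a₅·a₆ = ã₁·ã₂ + ã₅·ã₆. Then either (a₁ = ã₁, a₂ = ã₂, a₅ = ã₅, a₆ = ã₆) or (a₁ = ã₅, a₂ = ã₆, a₅ = ã₁, a₆ = ã₂). -/
lemma pair_eq (x y u v : ℝ) (hp : x * y = u * v) (hs : x + y = u + v) :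
    (x = u ∧ y = v) ∨ (x = v ∧ y = u) := by
  have h : (x - u) * (x - v) = 0 := by linear_combination x * hs - hp
  rcases mul_eq_zero.mp h with h | h
  · left; constructor <;> linarith [sub_eq_zero.mp h]
  · right; constructor <;> linarith [sub_eq_zero.mp h]

theorem duality_core (a₁ a₂ a₅ a₆ b₁ b₂ b₅ b₆ : ℝ)
    (h1 : a₁ * a₅ = b₁ * b₅) (h2 : a₁ + a₅ = b₁ + b₅)
    (h3 : a₂ * a₆ = b₂ * b₆) (h4 : a₂ + a₆ = b₂ + b₆)
    (h5 : a₁ * a₂ + a₅ * a₆ = b₁ * b₂ + b₅ * b₆) :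
    (a₁ = b₁ ∧ a₂ = b₂ ∧ a₅ = b₅ ∧ a₆ = b₆) ∨
    (a₁ = b₅ ∧ a₂ = b₆ ∧ a₅ = b₁ ∧ a₆ = b₂) := by
  rcases pair_eq a₁ a₅ b₁ b₅ h1 h2 with ⟨e1, e5⟩ | ⟨e1, e5⟩ <;>
  rcases pair_eq a₂ a₆ b₂ b₆ h3 h4 with ⟨e2, e6⟩ | ⟨e2, e6⟩
  · exact Or.inl ⟨e1, e2, e5, e6⟩
  · rw [e1, e2, e5, e6] at h5
    have h : (b₁ - b₅) * (b₆ - b₂) = 0 := by linear_combination h5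
    rcases mul_eq_zero.mp h with h | h <;> have h' := sub_eq_zero.mp h
    · exact Or.inr ⟨by linarith, e2, by linarith, e6⟩
    · exact Or.inl ⟨e1, by linarith, e5, by linarith⟩
  · rw [e1, e2, e5, e6] at h5
    have h : (b₁ - b₅) * (b₂ - b₆) = 0 := by linear_combination -h5
    rcases mul_eq_zero.mp h with h | h <;> have h' := sub_eq_zero.mp h
    · exact Or.inl ⟨by linarith, e2, by linarith, e6⟩
    · exact Or.inr ⟨e1, by linarith, e5, by linarith⟩
  · exact Or.inr ⟨e1, e2, e5, e6⟩
end

section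
/- The function F(t) = 1 − cos t · cosh t has infinitely many positive zeros. -/
open Real

theorem clamped_clamped_infinitely_many_zeros :
    {t : ℝ | 0 < t ∧ 1 - Real.cos t * Real.cosh t = 0}.Infinite := by
  apply Set.infinite_of_not_bddAbove
  rintro ⟨B, hB⟩
  obtain ⟨n, hn⟩ := exists_nat_gt (max B 0)
  set a : ℝ := n * (2 * π) with ha
  have hπ : (1:ℝ) < π := by linarith [Real.pi_gt_three]
  have hna : (n:ℝ) ≤ a := by
    rw [ha]
    nlinarith [Nat.cast_nonneg (α := ℝ) n]
  have haB : B < a := lt_of_le_of_lt (le_max_left B 0) (lt_of_lt_of_le hn hna)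
  have ha0 : 0 < a := lt_of_le_of_lt (le_max_right B 0) (lt_of_lt_of_le hn hna)
  set b : ℝ := a + π / 2 with hb
  have hab : a ≤ b := by rw [hb]; linarith
  have hcosa : Real.cos a = 1 := Real.cos_nat_mul_two_pi n
  have hsina : Real.sin a = 0 := by
    have := Real.sin_sq_add_cos_sq a
    nlinarith
  have hcosb : Real.cos b = 0 := by
    rw [hb, Real.cos_add, hcosa, hsina, Real.cos_pi_div_two, Real.sin_pi_div_two]
    ring
  set F : ℝ → ℝ := fun t => 1 - Real.cos t * Real.cosh t with hF
  have hFa : F a < 0 := by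
    have : 1 < Real.cosh a := by
      rw [Real.one_lt_cosh]
      exact ne_of_gt ha0
    simp only [hF, hcosa]
    linarith
  have hFb : 0 < F b := by simp [hF, hcosb]
  have hcont : ContinuousOn F (Set.Icc a b) :=
    (continuous_const.sub (Real.continuous_cos.mul Real.continuous_cosh)).continuousOn
  have := intermediate_value_Icc hab hcont
  have h0 : (0:ℝ) ∈ Set.Icc (F a) (F b) := ⟨le_of_lt hFa, le_of_lt hFb⟩
  obtain ⟨t, ht, hFt⟩ := this h0
  have hmem : t ∈ {t : ℝ | 0 < t ∧ 1 - Real.cos t * Real.cosh t = 0} :=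
    ⟨lt_of_lt_of_le ha0 ht.1, hFt⟩
  exact absurd (hB hmem) (not_le.mpr (lt_of_lt_of_le haB ht.1))
end

section
/- The function G(t) = 1 + cos t · cosh t has infinitely many positive zeros. -/
lemma clamped_free_key (n : ℕ) : ∃ t : ℝ,
    t ∈ Set.Ioo (2*Real.pi*n + Real.pi/2) (2*Real.pi*n + Real.pi)
    ∧ 1 + Real.cos t * Real.cosh t = 0 := by
  have hpi := Real.pi_pos
  set a := 2*Real.pi*n + Real.pi/2 with ha
  set b := 2*Real.pi*n + Real.pi with hb
  have hn : (0:ℝ) ≤ (n:ℝ) := Nat.cast_nonneg n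
  have hab : a ≤ b := by rw [ha, hb]; nlinarith
  have hcont : ContinuousOn (fun t => 1 + Real.cos t * Real.cosh t) (Set.Icc a b) :=
    (continuous_const.add (Real.continuous_cos.mul Real.continuous_cosh)).continuousOn
  have hcosa : Real.cos a = 0 := by
    have : a = Real.pi/2 + n * (2*Real.pi) := by rw [ha]; ring
    rw [this, Real.cos_add_nat_mul_two_pi, Real.cos_pi_div_two]
  have hcosb : Real.cos b = -1 := by
    have : b = Real.pi + n * (2*Real.pi) := by rw [hb]; ring
    rw [this, Real.cos_add_nat_mul_two_pi, Real.cos_pi]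
  have hbpos : 0 < b := by rw [hb]; nlinarith
  have hcosh : 1 < Real.cosh b := Real.one_lt_cosh.mpr (ne_of_gt hbpos)
  have hfa : (fun t => 1 + Real.cos t * Real.cosh t) a = 1 := by simp [hcosa]
  have hfb : (fun t => 1 + Real.cos t * Real.cosh t) b = 1 - Real.cosh b := by
    simp [hcosb]; ring
  have h0 : (0:ℝ) ∈ Set.Ioo ((fun t => 1 + Real.cos t * Real.cosh t) b)
      ((fun t => 1 + Real.cos t * Real.cosh t) a) := by
    rw [hfa, hfb]; constructor <;> linarith
  obtain ⟨t, ht, hft⟩ := intermediate_value_Ioo' hab hcont h0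
  exact ⟨t, ht, hft⟩

theorem clamped_free_infinitely_many_zeros :
    {t : ℝ | 0 < t ∧ 1 + Real.cos t * Real.cosh t = 0}.Infinite := by
  have hpi := Real.pi_pos
  set T : ℕ → ℝ := fun n => (clamped_free_key n).choose with hT
  have hmem : ∀ n : ℕ, T n ∈ Set.Ioo (2*Real.pi*n + Real.pi/2) (2*Real.pi*n + Real.pi) :=
    fun n => (clamped_free_key n).choose_spec.1
  have hzero : ∀ n, 1 + Real.cos (T n) * Real.cosh (T n) = 0 :=
    fun n => (clamped_free_key n).choose_spec.2
  apply Set.infinite_of_injective_forall_mem (f := T)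
  case hi =>
    have hmono : StrictMono T := by
      apply strictMono_nat_of_lt_succ
      intro n
      have h1 := (hmem n).2
      have h2 := (hmem (n+1)).1
      have : (2:ℝ)*Real.pi*n + Real.pi ≤ 2*Real.pi*(n+1) + Real.pi/2 := by nlinarith
      push_cast at h2
      linarith
    exact hmono.injective
  case hf =>
    intro n
    have h1 := (hmem n).1
    have hn : (0:ℝ) ≤ (n:ℝ) := Nat.cast_nonneg n
    exact ⟨by nlinarith, hzero n⟩
end
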